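/- Let Γ ≥ 0 and Δ ≥ 2 be even integers, and let m ≥ 1, n' ≥ 0, n'' ≥ 0 be integers satisfying 2m + n' + n'' = (2^{Γ+2Δ} − 1)/3, 3n' + n'' = 2^{Γ+Δ} − 1, and n'' ≤ 2^Δ − 1. Then there exists an additive 1-perfect code in ℤ4^{2m} × ℤ2^{2n'} × ℤ4^{n''} with respect to the Doob D(m, n'+n'')-metric. -/

import Mathlib

open SimpleGraph

/-- The box (Cartesian) product of an indexed family of simple graphs. -/
def boxPi {ι : Type*} {V : ι → Type*} (G : ∀ i, SimpleGraph (V i)) :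
    SimpleGraph (∀ i, V i) where
  Adj x y := ∃ i, (G i).Adj (x i) (y i) ∧ ∀ j, j ≠ i → x j = y j
  symm := by
    constructor
    rintro x y ⟨i, h, he⟩
    exact ⟨i, (G i).symm.symm _ _ h, fun j hj => (he j hj).symm⟩
  loopless := by
    constructor
    rintro x ⟨i, h, -⟩
    exact (G i).loopless.irrefl _ h

/-- The Shrikhande graph on `(ZMod 4) × (ZMod 4)`. -/
def Shri : SimpleGraph (ZMod 4 × ZMod 4) where
  Adj a b := a - b ∈
    ({(0, 1), (1, 0), (1, 1), (0, 3), (3, 0), (3, 3)} : Finset (ZMod 4 × ZMod 4))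
  symm := by
    constructor
    have h : ∀ a b : ZMod 4 × ZMod 4,
        a - b ∈ ({(0, 1), (1, 0), (1, 1), (0, 3), (3, 0), (3, 3)} :
          Finset (ZMod 4 × ZMod 4)) →
        b - a ∈ ({(0, 1), (1, 0), (1, 1), (0, 3), (3, 0), (3, 3)} :
          Finset (ZMod 4 × ZMod 4)) := by decide
    exact fun a b hab => h a b hab
  loopless := by
    constructor
    intro a h
    rw [sub_self] at h
    revert h
    decide

/-- `C` is a 1-perfect code in `G`: every vertex is at graph distance at most 1
(i.e., equal or adjacent) from exactly one element of `C`. -/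
def IsPerfectCode {V : Type*} (G : SimpleGraph V) (C : Set V) : Prop :=
  ∀ v : V, ∃! c : V, c ∈ C ∧ (v = c ∨ G.Adj v c)

/-- The vertex set `ℤ₄^{2m} × ℤ₂^{2n'} × ℤ₄^{n''}`, the consecutive pairs of
`ZMod 4`- (resp. `ZMod 2`-) coordinates being grouped together. -/
abbrev DoobVtx (m n' n'' : ℕ) : Type :=
  (Fin m → ZMod 4 × ZMod 4) × (Fin n' → ZMod 2 × ZMod 2) × (Fin n'' → ZMod 4)

/-- The Doob graph `D(m, n' + n'')` on `ℤ₄^{2m} × ℤ₂^{2n'} × ℤ₄^{n''}`. -/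
def DoobGraphZ (m n' n'' : ℕ) : SimpleGraph (DoobVtx m n' n'') :=
  (boxPi fun _ : Fin m => Shri) □
    ((boxPi fun _ : Fin n' => (⊤ : SimpleGraph (ZMod 2 × ZMod 2))) □
      (boxPi fun _ : Fin n'' => (⊤ : SimpleGraph (ZMod 4))))

set_option linter.unnecessarySeqFocus false
set_option maxHeartbeats 1000000

namespace DoobPf

def sp {n : ℕ} (x : ZMod n × ZMod n) : ZMod n × ZMod n := (-x.2, x.1 - x.2)
lemma sp_add {n : ℕ} (x y : ZMod n × ZMod n) : sp (x + y) = sp x + sp y := by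
  refine Prod.ext_iff.mpr ⟨?_, ?_⟩ <;> simp [sp] <;> ring
lemma sp_sp_sp {n : ℕ} (x : ZMod n × ZMod n) : sp (sp (sp x)) = x := by
  refine Prod.ext_iff.mpr ⟨?_, ?_⟩ <;> simp [sp] <;> ring
lemma sp_sum {n : ℕ} (x : ZMod n × ZMod n) : x + sp x + sp (sp x) = 0 := by
  refine Prod.ext_iff.mpr ⟨?_, ?_⟩ <;> simp [sp] <;> ring

abbrev Hg (g e : ℕ) : Type := (Fin g → ZMod 2 × ZMod 2) × (Fin e → ZMod 4 × ZMod 4)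
variable {g e : ℕ}
def sigH (x : Hg g e) : Hg g e := (fun i => sp (x.1 i), fun i => sp (x.2 i))
lemma sigH_add (x y : Hg g e) : sigH (x + y) = sigH x + sigH y :=
  Prod.ext_iff.mpr ⟨funext fun i => sp_add (x.1 i) (y.1 i),
    funext fun i => sp_add (x.2 i) (y.2 i)⟩
lemma sigH_zero : sigH (0 : Hg g e) = 0 := by
  refine Prod.ext_iff.mpr ⟨funext fun i => ?_, funext fun i => ?_⟩ <;>
    simp [sigH, sp]
lemma sigH_neg (x : Hg g e) : sigH (-x) = - sigH x := by
  have k : ∀ (n : ℕ) (y : ZMod n × ZMod n), sp (-y) = - sp y := by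
    intro n y
    refine Prod.ext_iff.mpr ⟨?_, ?_⟩ <;> simp [sp] <;> ring
  exact Prod.ext_iff.mpr ⟨funext fun i => k 2 (x.1 i), funext fun i => k 4 (x.2 i)⟩
lemma sigH3 (x : Hg g e) : sigH (sigH (sigH x)) = x :=
  Prod.ext_iff.mpr ⟨funext fun i => sp_sp_sp (x.1 i), funext fun i => sp_sp_sp (x.2 i)⟩
lemma sigH_sum (x : Hg g e) : x + sigH x + sigH (sigH x) = 0 :=
  Prod.ext_iff.mpr ⟨funext fun i => sp_sum (x.1 i), funext fun i => sp_sum (x.2 i)⟩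
lemma sigH_fix {x : Hg g e} (h : sigH x = x) : x = 0 := by
  have k2 : ∀ y : ZMod 2 × ZMod 2, sp y = y → y = 0 := by decide
  have k4 : ∀ y : ZMod 4 × ZMod 4, sp y = y → y = 0 := by decide
  refine Prod.ext_iff.mpr ⟨funext fun i => ?_, funext fun i => ?_⟩
  · exact k2 _ (congrFun (congrArg Prod.fst h) i)
  · exact k4 _ (congrFun (congrArg Prod.snd h) i)
lemma sigH_inj : Function.Injective (sigH : Hg g e → Hg g e) := by
  intro x y hxy
  have := congrArg (fun z => sigH (sigH z)) hxy
  simpa only [sigH3] using this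
lemma four_torsion (x : Hg g e) : x + x + (x + x) = 0 := by
  have k2 : ∀ y : ZMod 2 × ZMod 2, y + y + (y + y) = 0 := by decide
  have k4 : ∀ y : ZMod 4 × ZMod 4, y + y + (y + y) = 0 := by decide
  exact Prod.ext_iff.mpr ⟨funext fun i => k2 (x.1 i), funext fun i => k4 (x.2 i)⟩

lemma three_nsmul_neg (x : Hg g e) : (3 : ℕ) • x = -x := by
  have h4 := four_torsion x
  have h3 : (3 : ℕ) • x = x + x + x := by
    rw [show (3:ℕ) = 2 + 1 from rfl, add_nsmul, two_nsmul, one_nsmul]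
  rw [h3, ← add_eq_zero_iff_eq_neg]
  calc x + x + x + x = x + x + (x + x) := by abel
    _ = 0 := h4

/-! ### scalar injectivity -/

lemma exists_nontor_coord {x : Hg g e} (hx : x + x ≠ 0) :
    ∃ i : Fin e, x.2 i + x.2 i ≠ 0 := by
  by_contra hc
  push_neg at hc
  apply hx
  refine Prod.ext_iff.mpr ⟨funext fun i => ?_, funext fun i => hc i⟩
  exact (by decide : ∀ y : ZMod 2 × ZMod 2, y + y = 0) (x.1 i)

lemma key4 : ∀ y : ZMod 4 × ZMod 4, y + y ≠ 0 → ∀ c d c' d' : ZMod 4,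
    c.val • y + d.val • sp y = c'.val • y + d'.val • sp y → c = c' ∧ d = d' := by decide
lemma key2a : ∀ y : ZMod 2 × ZMod 2, y ≠ 0 → ∀ c d c' d' : ZMod 2,
    c.val • y + d.val • sp y = c'.val • y + d'.val • sp y → c = c' ∧ d = d' := by decide
lemma key2b : ∀ y : ZMod 4 × ZMod 4, y ≠ 0 → ∀ c d c' d' : ZMod 2,
    c.val • y + d.val • sp y = c'.val • y + d'.val • sp y → c = c' ∧ d = d' := by decide
lemma key1 : ∀ y : ZMod 4 × ZMod 4, y + y ≠ 0 → ∀ c c' : ZMod 4,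
    c.val • y = c'.val • y → c = c' := by decide

lemma scalar_inj4 {x : Hg g e} (hx : x + x ≠ 0) (c d c' d' : ZMod 4)
    (h : c.val • x + d.val • sigH x = c'.val • x + d'.val • sigH x) :
    c = c' ∧ d = d' := by
  obtain ⟨i, hi⟩ := exists_nontor_coord hx
  have hcoord : c.val • (x.2 i) + d.val • sp (x.2 i)
      = c'.val • (x.2 i) + d'.val • sp (x.2 i) := by
    have := congrFun (congrArg Prod.snd h) i
    exact this
  exact key4 _ hi c d c' d' hcoord

lemma scalar_inj1 {x : Hg g e} (hx : x + x ≠ 0) (c c' : ZMod 4)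
    (h : c.val • x = c'.val • x) : c = c' := by
  obtain ⟨i, hi⟩ := exists_nontor_coord hx
  have hcoord : c.val • (x.2 i) = c'.val • (x.2 i) := by
    have := congrFun (congrArg Prod.snd h) i
    exact this
  exact key1 _ hi c c' hcoord

lemma scalar_inj2 {x : Hg g e} (hx : x ≠ 0) (c d c' d' : ZMod 2)
    (h : c.val • x + d.val • sigH x = c'.val • x + d'.val • sigH x) :
    c = c' ∧ d = d' := by
  have hex : (∃ i, x.1 i ≠ 0) ∨ (∃ i, x.2 i ≠ 0) := by
    by_contra hc
    push_neg at hc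
    exact hx (Prod.ext_iff.mpr ⟨funext fun i => hc.1 i, funext fun i => hc.2 i⟩)
  rcases hex with ⟨i, hi⟩ | ⟨i, hi⟩
  · have hcoord : c.val • (x.1 i) + d.val • sp (x.1 i)
        = c'.val • (x.1 i) + d'.val • sp (x.1 i) := by
      have := congrFun (congrArg Prod.fst h) i
      exact this
    exact key2a _ hi c d c' d' hcoord
  · have hcoord : c.val • (x.2 i) + d.val • sp (x.2 i)
        = c'.val • (x.2 i) + d'.val • sp (x.2 i) := by
      have := congrFun (congrArg Prod.snd h) i
      exact this
    exact key2b _ hi c d c' d' hcoord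

/-! ### classes -/

def cls (x : Hg g e) : Finset (Hg g e) :=
  {x, -x, sigH x, -sigH x, sigH (sigH x), -sigH (sigH x)}

lemma mem_cls_self (x : Hg g e) : x ∈ cls x := by simp [cls]

lemma cls_neg (x : Hg g e) : cls (-x) = cls x := by
  unfold cls
  rw [sigH_neg, sigH_neg, neg_neg, neg_neg, neg_neg]
  ext a; simp; try tauto

lemma cls_sig (x : Hg g e) : cls (sigH x) = cls x := by
  unfold cls
  rw [sigH3]
  ext a; simp; try tauto

lemma cls_eq_of_mem {x y : Hg g e} (h : y ∈ cls x) : cls y = cls x := by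
  simp only [cls, Finset.mem_insert, Finset.mem_singleton] at h
  rcases h with h | h | h | h | h | h <;> subst h
  · rfl
  · exact cls_neg x
  · exact cls_sig x
  · rw [cls_neg, cls_sig]
  · rw [cls_sig, cls_sig]
  · rw [cls_neg, cls_sig, cls_sig]

lemma mem_cls_iff {x y : Hg g e} : y ∈ cls x ↔ cls y = cls x :=
  ⟨cls_eq_of_mem, fun h => h ▸ mem_cls_self y⟩

lemma mem_cls_symm {x y : Hg g e} (h : y ∈ cls x) : x ∈ cls y :=
  mem_cls_iff.mpr (cls_eq_of_mem h).symm

lemma cls_zero : cls (0 : Hg g e) = {0} := by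
  unfold cls; simp [sigH_zero]

lemma eq_zero_of_zero_mem_cls {x : Hg g e} (h : (0 : Hg g e) ∈ cls x) : x = 0 := by
  have h1 := cls_eq_of_mem h
  rw [cls_zero] at h1
  have h2 : x ∈ ({(0 : Hg g e)} : Finset (Hg g e)) := h1 ▸ mem_cls_self x
  simpa using h2

lemma tor_of_mem_cls {x y : Hg g e} (h : y ∈ cls x) (hx : x + x = 0) : y + y = 0 := by
  have hs : sigH x + sigH x = 0 := by rw [← sigH_add, hx, sigH_zero]
  have hss : sigH (sigH x) + sigH (sigH x) = 0 := by rw [← sigH_add, hs, sigH_zero]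
  simp only [cls, Finset.mem_insert, Finset.mem_singleton] at h
  rcases h with h | h | h | h | h | h <;> subst h
  · exact hx
  · rw [← neg_add, hx, neg_zero]
  · exact hs
  · rw [← neg_add, hs, neg_zero]
  · exact hss
  · rw [← neg_add, hss, neg_zero]

lemma dbl_mem_cls {x y : Hg g e} (h : y ∈ cls x) : y + y ∈ cls (x + x) := by
  simp only [cls, Finset.mem_insert, Finset.mem_singleton] at h ⊢
  rcases h with h | h | h | h | h | h <;> subst h
  · exact Or.inl rfl
  · right; left; rw [← neg_add]
  · right; right; left; rw [← sigH_add]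
  · right; right; right; left; rw [← neg_add, ← sigH_add]
  · right; right; right; right; left; rw [← sigH_add, ← sigH_add]
  · right; right; right; right; right; rw [← neg_add, ← sigH_add, ← sigH_add]

lemma sigH_sq_eq (x : Hg g e) : sigH (sigH x) = -x - sigH x := by
  have h := sigH_sum x
  have : sigH (sigH x) = -(x + sigH x) := eq_neg_of_add_eq_zero_right h
  rw [this]; abel

def sixS : Finset (ZMod 4 × ZMod 4) := {(1,0),(3,0),(0,1),(0,3),(3,3),(1,1)}

def esc (x : Hg g e) (p : ZMod 4 × ZMod 4) : Hg g e :=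
  p.1.val • x + p.2.val • sigH x

lemma esc10 (x : Hg g e) : esc x (1,0) = x := by
  show (1 : ZMod 4).val • x + (0 : ZMod 4).val • sigH x = x
  rw [show (1 : ZMod 4).val = 1 from rfl, show (0 : ZMod 4).val = 0 from rfl]
  rw [one_nsmul, zero_nsmul, add_zero]
lemma esc30 (x : Hg g e) : esc x (3,0) = -x := by
  show (3 : ZMod 4).val • x + (0 : ZMod 4).val • sigH x = -x
  rw [show (3 : ZMod 4).val = 3 from rfl, show (0 : ZMod 4).val = 0 from rfl]
  rw [three_nsmul_neg, zero_nsmul, add_zero]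
lemma esc01 (x : Hg g e) : esc x (0,1) = sigH x := by
  show (0 : ZMod 4).val • x + (1 : ZMod 4).val • sigH x = sigH x
  rw [show (1 : ZMod 4).val = 1 from rfl, show (0 : ZMod 4).val = 0 from rfl]
  rw [one_nsmul, zero_nsmul, zero_add]
lemma esc03 (x : Hg g e) : esc x (0,3) = -sigH x := by
  show (0 : ZMod 4).val • x + (3 : ZMod 4).val • sigH x = -sigH x
  rw [show (3 : ZMod 4).val = 3 from rfl, show (0 : ZMod 4).val = 0 from rfl]
  rw [three_nsmul_neg, zero_nsmul, zero_add]
lemma esc33 (x : Hg g e) : esc x (3,3) = sigH (sigH x) := by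
  show (3 : ZMod 4).val • x + (3 : ZMod 4).val • sigH x = sigH (sigH x)
  rw [show (3 : ZMod 4).val = 3 from rfl]
  rw [three_nsmul_neg, three_nsmul_neg, sigH_sq_eq]; abel
lemma esc11 (x : Hg g e) : esc x (1,1) = -sigH (sigH x) := by
  show (1 : ZMod 4).val • x + (1 : ZMod 4).val • sigH x = -sigH (sigH x)
  rw [show (1 : ZMod 4).val = 1 from rfl]
  rw [one_nsmul, one_nsmul, sigH_sq_eq]; abel

lemma cls_eq_image (x : Hg g e) : cls x = sixS.image (esc x) := by
  unfold sixS
  simp only [Finset.image_insert, Finset.image_singleton]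
  rw [esc10, esc30, esc01, esc03, esc33, esc11]
  rfl

lemma cls_card_six {x : Hg g e} (hx : x + x ≠ 0) : (cls x).card = 6 := by
  rw [cls_eq_image]
  rw [Finset.card_image_of_injOn]
  · rfl
  · intro p _ q _ hpq
    obtain ⟨h1, h2⟩ := scalar_inj4 hx p.1 p.2 q.1 q.2 hpq
    exact Prod.ext_iff.mpr ⟨h1, h2⟩

lemma neg_eq_self_of_tor {x : Hg g e} (hx : x + x = 0) : -x = x :=
  neg_eq_of_add_eq_zero_left hx

lemma cls_tor {x : Hg g e} (hx : x + x = 0) :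
    cls x = {x, sigH x, sigH (sigH x)} := by
  have hs : sigH x + sigH x = 0 := by rw [← sigH_add, hx, sigH_zero]
  have hss : sigH (sigH x) + sigH (sigH x) = 0 := by rw [← sigH_add, hs, sigH_zero]
  unfold cls
  rw [neg_eq_self_of_tor hx, neg_eq_self_of_tor hs, neg_eq_self_of_tor hss]
  ext a; simp; try tauto

lemma sig_ne_self {x : Hg g e} (hx0 : x ≠ 0) : sigH x ≠ x :=
  fun h => hx0 (sigH_fix h)

lemma sigsq_ne_self {x : Hg g e} (hx0 : x ≠ 0) : sigH (sigH x) ≠ x := by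
  intro h
  have h2 : sigH (sigH (sigH x)) = sigH x := congrArg sigH h
  rw [sigH3] at h2
  exact hx0 (sigH_fix h2.symm)

lemma cls_card_three {x : Hg g e} (hx0 : x ≠ 0) (hx : x + x = 0) :
    (cls x).card = 3 := by
  rw [cls_tor hx]
  have d1 : x ≠ sigH x := fun h => (sig_ne_self hx0) h.symm
  have d2 : x ≠ sigH (sigH x) := fun h => (sigsq_ne_self hx0) h.symm
  have d3 : sigH x ≠ sigH (sigH x) := fun h => (sig_ne_self hx0) (sigH_inj h).symm
  rw [Finset.card_insert_of_notMem (by simp [d1, d2]),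
    Finset.card_insert_of_notMem (by simp [d3]), Finset.card_singleton]

/-! ### quotient -/

def st (g e : ℕ) : Setoid (Hg g e) :=
  ⟨fun x y => cls x = cls y, ⟨fun _ => rfl, Eq.symm, Eq.trans⟩⟩

instance : DecidableRel (st g e).r := fun x y =>
  inferInstanceAs (Decidable (cls x = cls y))

abbrev Qcl (g e : ℕ) := Quotient (st g e)

instance : DecidableEq (Qcl g e) :=
  @Quotient.decidableEq _ (st g e) (fun x y => inferInstanceAs (Decidable (cls x = cls y)))

instance : Fintype (Qcl g e) :=
  @Quotient.fintype _ _ (st g e) (fun x y => inferInstanceAs (Decidable (cls x = cls y)))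

def qm (x : Hg g e) : Qcl g e := Quotient.mk (st g e) x

lemma qm_eq_iff {x y : Hg g e} : qm x = qm y ↔ cls x = cls y :=
  ⟨Quotient.exact, fun h => Quotient.sound (h : (st g e).r x y)⟩

lemma qm_out (c : Qcl g e) : qm c.out = c := Quotient.out_eq c

lemma qm_eq_iff_mem {x : Hg g e} {c : Qcl g e} : qm x = c ↔ x ∈ cls c.out := by
  rw [← qm_out c, qm_eq_iff, ← mem_cls_iff, qm_out]

lemma mem_cls_out (x : Hg g e) : x ∈ cls ((qm x).out) := qm_eq_iff_mem.mp rfl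

def torQ (c : Qcl g e) : Prop := c.out + c.out = 0

lemma torQ_iff {x : Hg g e} : torQ (qm x) ↔ x + x = 0 :=
  ⟨fun h => tor_of_mem_cls (mem_cls_out x) h,
   fun h => tor_of_mem_cls (mem_cls_symm (mem_cls_out x)) h⟩

lemma torQ_qm_zero : torQ (qm (0 : Hg g e)) := torQ_iff.mpr (by simp)

lemma qm_zero_out : (qm (0 : Hg g e)).out = 0 := by
  have h := mem_cls_symm (mem_cls_out (0 : Hg g e))
  rw [cls_zero] at h
  simpa using h

lemma qm_eq_zero_iff {x : Hg g e} : qm x = qm 0 ↔ x = 0 := by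
  rw [qm_eq_iff_mem, qm_zero_out, cls_zero]
  simp

lemma qm_dbl {x y : Hg g e} (h : qm x = qm y) : qm (x + x) = qm (y + y) := by
  rw [qm_eq_iff] at h ⊢
  have : y ∈ cls x := mem_cls_iff.mpr h.symm
  exact (cls_eq_of_mem (dbl_mem_cls this)).symm


/-! ### counting -/

open Finset

noncomputable instance : DecidablePred (torQ (g := g) (e := e)) :=
  fun c => inferInstanceAs (Decidable (c.out + c.out = 0))

def ranDbl (x : Hg g e) : Prop := ∃ w : Hg g e, w + w = x

instance : DecidablePred (ranDbl (g := g) (e := e)) :=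
  fun x => inferInstanceAs (Decidable (∃ w, w + w = x))

lemma fiber_eq_cls (P : Qcl g e → Prop) [DecidablePred P] {c : Qcl g e} (hc : P c) :
    ((univ.filter fun x : Hg g e => P (qm x)).filter fun x => qm x = c) = cls c.out := by
  ext x
  simp only [Finset.mem_filter, Finset.mem_univ, true_and]
  constructor
  · rintro ⟨-, h⟩; exact qm_eq_iff_mem.mp h
  · intro h
    have hq : qm x = c := qm_eq_iff_mem.mpr h
    exact ⟨hq ▸ hc, hq⟩

lemma card_filter_classes (P : Qcl g e → Prop) [DecidablePred P] (k : ℕ)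
    (hsize : ∀ c, P c → (cls c.out).card = k) :
    (univ.filter fun x : Hg g e => P (qm x)).card = k * (univ.filter P).card := by
  rw [Finset.card_eq_sum_card_fiberwise (f := fun x => qm x) (t := univ.filter P)
      (fun x hx => by
        simp only [Finset.mem_coe, mem_filter, mem_univ, true_and] at hx ⊢; exact hx)]
  rw [Finset.sum_congr rfl (fun c hc => by
    rw [fiber_eq_cls P (by simpa using hc), hsize c (by simpa using hc)])]
  simp [mul_comm]

lemma card_Hg : Fintype.card (Hg g e) = 2 ^ (2*g + 4*e) := by
  have c2 : Fintype.card (ZMod 2 × ZMod 2) = 4 := rfl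
  have c4 : Fintype.card (ZMod 4 × ZMod 4) = 16 := rfl
  rw [Fintype.card_prod, Fintype.card_fun, Fintype.card_fun, c2, c4,
    Fintype.card_fin, Fintype.card_fin,
    pow_add, pow_mul, pow_mul]
  norm_num

def torEquiv :
    {x : Hg g e // x + x = 0} ≃
      ((Fin g → ZMod 2 × ZMod 2) × (Fin e → {y : ZMod 4 × ZMod 4 // y + y = 0})) where
  toFun z := (z.1.1, fun i => ⟨z.1.2 i, congrFun (congrArg Prod.snd z.2) i⟩)
  invFun w := ⟨(w.1, fun i => (w.2 i).1), Prod.ext_iff.mpr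
    ⟨funext fun i => (by decide : ∀ y : ZMod 2 × ZMod 2, y + y = 0) _,
     funext fun i => (w.2 i).2⟩⟩
  left_inv z := rfl
  right_inv w := rfl

lemma card_tor_subtype : Fintype.card {y : ZMod 4 × ZMod 4 // y + y = 0} = 4 := by decide

lemma card_tor :
    (univ.filter fun x : Hg g e => x + x = 0).card = 2 ^ (2*g + 2*e) := by
  rw [← Fintype.card_subtype, Fintype.card_congr torEquiv,
    Fintype.card_prod, Fintype.card_fun, Fintype.card_fun, card_tor_subtype,
    Fintype.card_fin, Fintype.card_fin,
    show Fintype.card (ZMod 2 × ZMod 2) = 4 from rfl,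
    pow_add, pow_mul, pow_mul]
  norm_num

lemma ranDbl_of_mem_cls {x y : Hg g e} (h : y ∈ cls x) (hx : ranDbl x) : ranDbl y := by
  obtain ⟨w, rfl⟩ := hx
  simp only [cls, mem_insert, mem_singleton] at h
  rcases h with h|h|h|h|h|h <;> subst h
  · exact ⟨w, rfl⟩
  · exact ⟨-w, by abel⟩
  · exact ⟨sigH w, by rw [← sigH_add]⟩
  · exact ⟨-sigH w, by rw [← neg_add, ← sigH_add]⟩
  · exact ⟨sigH (sigH w), by rw [← sigH_add, ← sigH_add]⟩
  · exact ⟨-sigH (sigH w), by rw [← neg_add, ← sigH_add, ← sigH_add]⟩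

lemma tor_of_ranDbl {x : Hg g e} (hx : ranDbl x) : x + x = 0 := by
  obtain ⟨w, rfl⟩ := hx
  exact four_torsion w

def s2Q (c : Qcl g e) : Prop := ranDbl c.out

noncomputable instance : DecidablePred (s2Q (g := g) (e := e)) :=
  fun c => inferInstanceAs (Decidable (∃ w, w + w = c.out))

lemma s2Q_iff {x : Hg g e} : s2Q (qm x) ↔ ranDbl x :=
  ⟨fun h => ranDbl_of_mem_cls (mem_cls_out x) h,
   fun h => ranDbl_of_mem_cls (mem_cls_symm (mem_cls_out x)) h⟩

def dd (c : ZMod 2) : ZMod 4 := 2 * (c.val : ZMod 4)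

def iS2 (f : Fin e → ZMod 2 × ZMod 2) : Hg g e :=
  (0, fun i => (dd (f i).1, dd (f i).2))

lemma iS2_ranDbl (f : Fin e → ZMod 2 × ZMod 2) : ranDbl (iS2 (g := g) f) := by
  refine ⟨((0 : Fin g → ZMod 2 × ZMod 2),
    fun i => (((f i).1.val : ZMod 4), ((f i).2.val : ZMod 4))), ?_⟩
  refine Prod.ext_iff.mpr ⟨by simp [iS2], funext fun i => ?_⟩
  exact Prod.ext_iff.mpr ⟨(two_mul _).symm, (two_mul _).symm⟩

lemma iS2_inj : Function.Injective (iS2 (g := g) (e := e)) := by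
  have hdd : ∀ a b : ZMod 2, dd a = dd b → a = b := by decide
  intro f f' h
  funext i
  have hp := congrFun (congrArg Prod.snd h) i
  exact Prod.ext_iff.mpr ⟨hdd _ _ (congrArg Prod.fst hp), hdd _ _ (congrArg Prod.snd hp)⟩

lemma iS2_ne_zero {f : Fin e → ZMod 2 × ZMod 2} (hf : f ≠ 0) : iS2 (g := g) f ≠ 0 := by
  intro h
  apply hf
  have hdd : ∀ a : ZMod 2, dd a = 0 → a = 0 := by decide
  funext i
  have hp := congrFun (congrArg Prod.snd h) i
  exact Prod.ext_iff.mpr ⟨hdd _ (congrArg Prod.fst hp), hdd _ (congrArg Prod.snd hp)⟩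

lemma card_s2_classes_lower {k : ℕ} (hk : 3 * k + 1 ≤ 4 ^ e) :
    k ≤ (univ.filter fun c : Qcl g e => s2Q c ∧ c ≠ qm 0).card := by
  have hcl : (univ.filter fun x : Hg g e => (s2Q (qm x) ∧ qm x ≠ qm 0)).card
      = 3 * (univ.filter fun c : Qcl g e => s2Q c ∧ c ≠ qm 0).card := by
    refine card_filter_classes (fun c : Qcl g e => s2Q c ∧ c ≠ qm 0) 3 fun c hc => ?_
    refine cls_card_three ?_ (tor_of_ranDbl hc.1)
    intro h0
    exact hc.2 (by rw [← qm_out c, h0])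
  have hpt : (univ.filter fun x : Hg g e => (s2Q (qm x) ∧ qm x ≠ qm 0))
      = (univ.filter fun x : Hg g e => ranDbl x ∧ x ≠ 0) := by
    apply Finset.filter_congr
    intro x _
    simp only [s2Q_iff, ne_eq, qm_eq_zero_iff]
  have hlow : 4 ^ e - 1 ≤ (univ.filter fun x : Hg g e => ranDbl x ∧ x ≠ 0).card := by
    have := Finset.card_le_card_of_injOn (f := iS2 (g := g) (e := e))
      (s := (univ : Finset (Fin e → ZMod 2 × ZMod 2)).erase 0)
      (t := univ.filter fun x : Hg g e => ranDbl x ∧ x ≠ 0)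
      (fun f hf => by
        simp only [Finset.mem_coe, mem_filter, mem_univ, true_and]
        exact ⟨iS2_ranDbl f, iS2_ne_zero (Finset.ne_of_mem_erase hf)⟩)
      (fun a _ b _ hab => iS2_inj hab)
    calc 4 ^ e - 1
        = ((univ : Finset (Fin e → ZMod 2 × ZMod 2)).erase 0).card := by
          rw [Finset.card_erase_of_mem (mem_univ 0), Finset.card_univ, Fintype.card_fun]
          norm_num
      _ ≤ _ := this
  rw [hpt] at hcl
  omega


/-! ### scalar actions and value lemmas -/

lemma four_nsmul_zero (x : Hg g e) : (4 : ℕ) • x = 0 := by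
  rw [show (4:ℕ) • x = (2+2 : ℕ) • x from rfl, add_nsmul, two_nsmul]
  exact four_torsion x

lemma nsmul_mod4 (n : ℕ) (x : Hg g e) : n • x = (n % 4) • x := by
  conv_lhs => rw [← Nat.div_add_mod n 4]
  rw [add_nsmul, mul_nsmul, four_nsmul_zero, smul_zero, zero_add]

lemma nsmul_mod2 (n : ℕ) (x : Hg g e) (hx : x + x = 0) : n • x = (n % 2) • x := by
  conv_lhs => rw [← Nat.div_add_mod n 2]
  rw [add_nsmul, mul_nsmul, show (2:ℕ) • x = 0 by rw [two_nsmul, hx], smul_zero, zero_add]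

def zsm (c : ZMod 4) (x : Hg g e) : Hg g e := c.val • x
def zsm2 (c : ZMod 2) (x : Hg g e) : Hg g e := c.val • x

lemma zsm_add (c c' : ZMod 4) (x : Hg g e) : zsm (c + c') x = zsm c x + zsm c' x := by
  unfold zsm
  rw [ZMod.val_add, ← nsmul_mod4, add_nsmul]

lemma zsm2_add (c c' : ZMod 2) (x : Hg g e) (hx : x + x = 0) :
    zsm2 (c + c') x = zsm2 c x + zsm2 c' x := by
  unfold zsm2
  rw [ZMod.val_add, ← nsmul_mod2 _ _ hx, add_nsmul]

lemma zsm_zero (x : Hg g e) : zsm 0 x = 0 := by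
  unfold zsm
  rw [show (0 : ZMod 4).val = 0 from rfl, zero_nsmul]

lemma zsm2_zero (x : Hg g e) : zsm2 0 x = 0 := by
  unfold zsm2
  rw [show (0 : ZMod 2).val = 0 from rfl, zero_nsmul]

lemma zsm_one (x : Hg g e) : zsm 1 x = x := by
  unfold zsm
  rw [show (1 : ZMod 4).val = 1 from rfl, one_nsmul]

lemma zsm_two (x : Hg g e) : zsm 2 x = x + x := by
  unfold zsm
  rw [show (2 : ZMod 4).val = 2 from rfl, two_nsmul]

lemma zsm_three (x : Hg g e) : zsm 3 x = -x := by
  unfold zsm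
  rw [show (3 : ZMod 4).val = 3 from rfl, three_nsmul_neg]

/-- esc with ZMod 2 scalars -/
def esc2 (x : Hg g e) (p : ZMod 2 × ZMod 2) : Hg g e :=
  p.1.val • x + p.2.val • sigH x

lemma esc2_10 (x : Hg g e) : esc2 x (1,0) = x := by
  show (1 : ZMod 2).val • x + (0 : ZMod 2).val • sigH x = x
  rw [show (1 : ZMod 2).val = 1 from rfl, show (0 : ZMod 2).val = 0 from rfl,
    one_nsmul, zero_nsmul, add_zero]

lemma esc2_01 (x : Hg g e) : esc2 x (0,1) = sigH x := by
  show (0 : ZMod 2).val • x + (1 : ZMod 2).val • sigH x = sigH x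
  rw [show (1 : ZMod 2).val = 1 from rfl, show (0 : ZMod 2).val = 0 from rfl,
    one_nsmul, zero_nsmul, zero_add]

lemma esc2_11 {x : Hg g e} (hx : x + x = 0) : esc2 x (1,1) = sigH (sigH x) := by
  have hs : sigH x + sigH x = 0 := by rw [← sigH_add, hx, sigH_zero]
  show (1 : ZMod 2).val • x + (1 : ZMod 2).val • sigH x = sigH (sigH x)
  rw [show (1 : ZMod 2).val = 1 from rfl, one_nsmul, one_nsmul, sigH_sq_eq,
    sub_eq_add_neg, neg_eq_self_of_tor hx, neg_eq_self_of_tor hs]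

def spow (r : ℕ) (x : Hg g e) : Hg g e :=
  if r = 0 then x else if r = 1 then sigH x else sigH (sigH x)

lemma spow_mem_cls (r : ℕ) (x : Hg g e) : spow r x ∈ cls x := by
  unfold spow
  split_ifs <;> simp [cls]

lemma spow_add_self (r : ℕ) (x : Hg g e) : spow r x + spow r x = spow r (x + x) := by
  unfold spow
  split_ifs with h1 h2
  · rfl
  · rw [← sigH_add]
  · rw [← sigH_add, ← sigH_add]

lemma spow_ne_zero {x : Hg g e} (hx : x ≠ 0) (r : ℕ) : spow r x ≠ 0 := by
  unfold spow
  split_ifs <;> intro h <;> try exact hx h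
  · exact hx (by have := congrArg sigH (congrArg sigH h); rwa [sigH3, sigH_zero, sigH_zero] at this)
  · exact hx (by have := congrArg sigH h; rwa [sigH3, sigH_zero] at this)

lemma spow_tor {x : Hg g e} (hx : x + x = 0) (r : ℕ) : spow r x + spow r x = 0 := by
  rw [spow_add_self, hx]
  unfold spow
  split_ifs <;> simp [sigH_zero]

/-- spow expressed through esc -/
lemma spow0 (x : Hg g e) : spow 0 x = esc x (1,0) := by rw [esc10]; rfl
lemma spow1 (x : Hg g e) : spow 1 x = esc x (0,1) := by rw [esc01]; rfl
lemma spow2 (x : Hg g e) : spow 2 x = esc x (3,3) := by rw [esc33]; rfl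
lemma spow0' (x : Hg g e) : spow 0 x = x := rfl
lemma spow1' (x : Hg g e) : spow 1 x = sigH x := rfl
lemma spow2' (x : Hg g e) : spow 2 x = sigH (sigH x) := rfl

lemma spow_inj_tor {x : Hg g e} (hx0 : x ≠ 0) {r r' : ℕ}
    (hr : r < 3) (hr' : r' < 3) (h : spow r x = spow r' x) : r = r' := by
  have d1 : x ≠ sigH x := fun h => sig_ne_self hx0 h.symm
  have d2 : x ≠ sigH (sigH x) := fun h => sigsq_ne_self hx0 h.symm
  have d3 : sigH x ≠ sigH (sigH x) := fun h => sig_ne_self hx0 (sigH_inj h).symm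
  interval_cases r <;> interval_cases r' <;>
    simp_all [spow0', spow1', spow2', d1, d2, d3, d1.symm, d2.symm, d3.symm]

end DoobPf

namespace DoobPf

variable {g e : ℕ}

/-! ### more esc algebra -/

lemma esc_eq_zsm (x : Hg g e) (p : ZMod 4 × ZMod 4) :
    esc x p = zsm p.1 x + zsm p.2 (sigH x) := rfl

lemma esc2_eq_zsm2 (x : Hg g e) (p : ZMod 2 × ZMod 2) :
    esc2 x p = zsm2 p.1 x + zsm2 p.2 (sigH x) := rfl

lemma esc_add (x : Hg g e) (p q : ZMod 4 × ZMod 4) :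
    esc x (p + q) = esc x p + esc x q := by
  simp only [esc_eq_zsm, Prod.fst_add, Prod.snd_add, zsm_add]
  abel

lemma esc2_add {x : Hg g e} (hx : x + x = 0) (p q : ZMod 2 × ZMod 2) :
    esc2 x (p + q) = esc2 x p + esc2 x q := by
  have hsx : sigH x + sigH x = 0 := by rw [← sigH_add, hx, sigH_zero]
  simp only [esc2_eq_zsm2, Prod.fst_add, Prod.snd_add, zsm2_add _ _ _ hx,
    zsm2_add _ _ _ hsx]
  abel

lemma esc_zero_right (x : Hg g e) : esc x 0 = 0 := by
  simp only [esc_eq_zsm, Prod.fst_zero, Prod.snd_zero, zsm_zero, add_zero]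

lemma esc2_zero_right (x : Hg g e) : esc2 x 0 = 0 := by
  simp only [esc2_eq_zsm2, Prod.fst_zero, Prod.snd_zero, zsm2_zero, add_zero]

lemma zsm_add_right (c : ZMod 4) (x y : Hg g e) : zsm c (x + y) = zsm c x + zsm c y := by
  unfold zsm; exact nsmul_add x y c.val

lemma zsm_mul (a b : ZMod 4) (x : Hg g e) : zsm (a * b) x = zsm a (zsm b x) := by
  unfold zsm
  rw [ZMod.val_mul, ← nsmul_mod4, mul_nsmul]
  exact smul_comm _ _ _

/-- the six scalar pairs, indexed -/
def pm (r : Fin 3) (c : ZMod 4) : ZMod 4 × ZMod 4 :=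
  if r = 0 then (c, 0) else if r = 1 then (0, c) else (3 * c, 3 * c)

lemma pm_inj : ∀ (r r' : Fin 3) (c c' : ZMod 4), c ≠ 0 → c' ≠ 0 →
    pm r c = pm r' c' → r = r' ∧ c = c' := by decide

lemma pm_surj : ∀ p ∈ sixS, ∃ (r : Fin 3) (c : ZMod 4), c ≠ 0 ∧ pm r c = p := by decide

lemma zsm_spow (r : Fin 3) (c : ZMod 4) (w : Hg g e) :
    zsm c (spow r.val w) = esc w (pm r c) := by
  fin_cases r
  · show zsm c (spow 0 w) = esc w (c, 0)
    rw [spow0', esc_eq_zsm]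
    show zsm c w = zsm c w + zsm 0 (sigH w)
    rw [zsm_zero, add_zero]
  · show zsm c (spow 1 w) = esc w (0, c)
    rw [spow1', esc_eq_zsm]
    show zsm c (sigH w) = zsm 0 w + zsm c (sigH w)
    rw [zsm_zero, zero_add]
  · show zsm c (spow 2 w) = esc w (3 * c, 3 * c)
    rw [spow2', esc_eq_zsm]
    show zsm c (sigH (sigH w)) = zsm (3 * c) w + zsm (3 * c) (sigH w)
    rw [show (3 : ZMod 4) * c = c * 3 from mul_comm _ _, zsm_mul, zsm_mul,
      zsm_three, zsm_three, ← zsm_add_right, sigH_sq_eq]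
    congr 1
    abel

lemma zsm_two_spow (r : Fin 3) (w : Hg g e) :
    zsm 2 (spow r.val w) = spow r.val (w + w) := by
  rw [zsm_two, spow_add_self]

/-! ### the linear map -/

def phiF {g e m n' n'' : ℕ} (hS : Fin m → Hg g e) (tP : Fin n' → Hg g e)
    (wcol : Fin n'' → Hg g e) (v : DoobVtx m n' n'') : Hg g e :=
  (∑ i, esc (hS i) (v.1 i)) + (∑ j, esc2 (tP j) (v.2.1 j)) +
    (∑ l, zsm (v.2.2 l) (wcol l))

lemma phiF_add {g e m n' n'' : ℕ} (hS : Fin m → Hg g e) (tP : Fin n' → Hg g e)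
    (wcol : Fin n'' → Hg g e) (htor : ∀ j, tP j + tP j = 0)
    (u v : DoobVtx m n' n'') :
    phiF hS tP wcol (u + v) = phiF hS tP wcol u + phiF hS tP wcol v := by
  unfold phiF
  have h1 : ∀ i, esc (hS i) ((u + v).1 i) = esc (hS i) (u.1 i) + esc (hS i) (v.1 i) :=
    fun i => esc_add _ _ _
  have h2 : ∀ j, esc2 (tP j) ((u + v).2.1 j)
      = esc2 (tP j) (u.2.1 j) + esc2 (tP j) (v.2.1 j) :=
    fun j => esc2_add (htor j) _ _
  have h3 : ∀ l, zsm ((u + v).2.2 l) (wcol l)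
      = zsm (u.2.2 l) (wcol l) + zsm (v.2.2 l) (wcol l) :=
    fun l => zsm_add _ _ _
  rw [Finset.sum_congr rfl fun i _ => h1 i, Finset.sum_congr rfl fun j _ => h2 j,
    Finset.sum_congr rfl fun l _ => h3 l,
    Finset.sum_add_distrib, Finset.sum_add_distrib, Finset.sum_add_distrib]
  abel

lemma phiF_zero {g e m n' n'' : ℕ} (hS : Fin m → Hg g e) (tP : Fin n' → Hg g e)
    (wcol : Fin n'' → Hg g e) : phiF hS tP wcol 0 = 0 := by
  unfold phiF
  have h1 : ∀ i : Fin m, esc (hS i) ((0 : DoobVtx m n' n'').1 i) = 0 :=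
    fun i => esc_zero_right _
  have h2 : ∀ j : Fin n', esc2 (tP j) ((0 : DoobVtx m n' n'').2.1 j) = 0 :=
    fun j => esc2_zero_right _
  have h3 : ∀ l : Fin n'', zsm ((0 : DoobVtx m n' n'').2.2 l) (wcol l) = 0 :=
    fun l => zsm_zero _
  rw [Finset.sum_congr rfl fun i _ => h1 i, Finset.sum_congr rfl fun j _ => h2 j,
    Finset.sum_congr rfl fun l _ => h3 l]
  simp

/-! ### unit vectors -/

def unitS {m n' n'' : ℕ} (i : Fin m) (s : ZMod 4 × ZMod 4) : DoobVtx m n' n'' :=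
  (fun i' => if i' = i then s else 0, 0, 0)

def unitP {m n' n'' : ℕ} (j : Fin n') (s : ZMod 2 × ZMod 2) : DoobVtx m n' n'' :=
  (0, fun j' => if j' = j then s else 0, 0)

def unitZ {m n' n'' : ℕ} (l : Fin n'') (c : ZMod 4) : DoobVtx m n' n'' :=
  (0, 0, fun l' => if l' = l then c else 0)

lemma phiF_unitS {g e m n' n'' : ℕ} (hS : Fin m → Hg g e) (tP : Fin n' → Hg g e)
    (wcol : Fin n'' → Hg g e) (i : Fin m) (s : ZMod 4 × ZMod 4) :
    phiF hS tP wcol (unitS i s) = esc (hS i) s := by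
  unfold phiF unitS
  rw [Finset.sum_eq_single i
    (fun i' _ hne => by simp only [if_neg hne]; exact esc_zero_right _)
    (fun hni => absurd (Finset.mem_univ i) hni)]
  simp [esc2_zero_right, zsm_zero]

lemma phiF_unitP {g e m n' n'' : ℕ} (hS : Fin m → Hg g e) (tP : Fin n' → Hg g e)
    (wcol : Fin n'' → Hg g e) (j : Fin n') (s : ZMod 2 × ZMod 2) :
    phiF hS tP wcol (unitP j s) = esc2 (tP j) s := by
  unfold phiF unitP
  rw [Finset.sum_eq_single j
    (fun j' _ hne => by simp only [if_neg hne]; exact esc2_zero_right _)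
    (fun hnj => absurd (Finset.mem_univ j) hnj)]
  simp [esc_zero_right, zsm_zero]

lemma phiF_unitZ {g e m n' n'' : ℕ} (hS : Fin m → Hg g e) (tP : Fin n' → Hg g e)
    (wcol : Fin n'' → Hg g e) (l : Fin n'') (c : ZMod 4) :
    phiF hS tP wcol (unitZ l c) = zsm c (wcol l) := by
  unfold phiF unitZ
  rw [Finset.sum_eq_single l
    (fun l' _ hne => by simp only [if_neg hne]; exact zsm_zero _)
    (fun hnl => absurd (Finset.mem_univ l) hnl)]
  simp [esc_zero_right, esc2_zero_right]

/-! ### the ball -/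

def shriS : Finset (ZMod 4 × ZMod 4) :=
  {(0, 1), (1, 0), (1, 1), (0, 3), (3, 0), (3, 3)}

lemma shriS_eq_sixS : shriS = sixS := by decide

def ballP {m n' n'' : ℕ} (b : DoobVtx m n' n'') : Prop :=
  (∃ (i : Fin m) (s : ZMod 4 × ZMod 4), s ∈ shriS ∧ b = unitS i s) ∨
  (∃ (j : Fin n') (s : ZMod 2 × ZMod 2), s ≠ 0 ∧ b = unitP j s) ∨
  (∃ (l : Fin n'') (c : ZMod 4), c ≠ 0 ∧ b = unitZ l c)

end DoobPf

namespace DoobPf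

lemma boxPi_adj {ι : Type*} {V : ι → Type*} (G : ∀ i, SimpleGraph (V i))
    (x y : ∀ i, V i) :
    (boxPi G).Adj x y ↔ ∃ i, (G i).Adj (x i) (y i) ∧ ∀ j, j ≠ i → x j = y j :=
  Iff.rfl

lemma shri_adj (a b : ZMod 4 × ZMod 4) : Shri.Adj a b ↔ a - b ∈ shriS := Iff.rfl

lemma shriS_neg_mem : ∀ a ∈ shriS, -a ∈ shriS := by decide

lemma adj_iff_ballP {m n' n'' : ℕ} (x y : DoobVtx m n' n'') :
    (DoobGraphZ m n' n'').Adj x y ↔ ballP (y - x) := by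
  constructor
  · intro h
    rcases (SimpleGraph.boxProd_adj.mp h) with ⟨hA, h2⟩ | ⟨hBC, h1⟩
    · obtain ⟨i, hadj, hrest⟩ := (boxPi_adj _ _ _).mp hA
      left
      refine ⟨i, y.1 i - x.1 i, ?_, ?_⟩
      · have := shriS_neg_mem _ ((shri_adj _ _).mp hadj)
        rwa [neg_sub] at this
      · refine Prod.ext_iff.mpr ⟨funext fun i' => ?_, Prod.ext_iff.mpr ⟨?_, ?_⟩⟩
        · show y.1 i' - x.1 i' = (if i' = i then y.1 i - x.1 i else 0)
          by_cases hii : i' = i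
          · subst hii; rw [if_pos rfl]
          · rw [if_neg hii, sub_eq_zero]
            exact (hrest i' hii).symm
        · show y.2.1 - x.2.1 = 0
          rw [sub_eq_zero]
          exact (congrArg Prod.fst h2).symm
        · show y.2.2 - x.2.2 = 0
          rw [sub_eq_zero]
          exact (congrArg Prod.snd h2).symm
    · rcases SimpleGraph.boxProd_adj.mp hBC with ⟨hB, h22⟩ | ⟨hC, h21⟩
      · obtain ⟨j, hadj, hrest⟩ := (boxPi_adj _ _ _).mp hB
        right; left
        refine ⟨j, y.2.1 j - x.2.1 j, ?_, ?_⟩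
        · rw [ne_eq, sub_eq_zero]
          exact fun hc => ((SimpleGraph.top_adj _ _).mp hadj) hc.symm
        · refine Prod.ext_iff.mpr ⟨?_, Prod.ext_iff.mpr ⟨funext fun j' => ?_, ?_⟩⟩
          · show y.1 - x.1 = 0
            rw [sub_eq_zero]; exact h1.symm
          · show y.2.1 j' - x.2.1 j' = (if j' = j then y.2.1 j - x.2.1 j else 0)
            by_cases hjj : j' = j
            · subst hjj; rw [if_pos rfl]
            · rw [if_neg hjj, sub_eq_zero]
              exact (hrest j' hjj).symm
          · show y.2.2 - x.2.2 = 0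
            rw [sub_eq_zero]; exact h22.symm
      · obtain ⟨l, hadj, hrest⟩ := (boxPi_adj _ _ _).mp hC
        right; right
        refine ⟨l, y.2.2 l - x.2.2 l, ?_, ?_⟩
        · rw [ne_eq, sub_eq_zero]
          exact fun hc => ((SimpleGraph.top_adj _ _).mp hadj) hc.symm
        · refine Prod.ext_iff.mpr ⟨?_, Prod.ext_iff.mpr ⟨?_, funext fun l' => ?_⟩⟩
          · show y.1 - x.1 = 0
            rw [sub_eq_zero]; exact h1.symm
          · show y.2.1 - x.2.1 = 0
            rw [sub_eq_zero]; exact h21.symm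
          · show y.2.2 l' - x.2.2 l' = (if l' = l then y.2.2 l - x.2.2 l else 0)
            by_cases hll : l' = l
            · subst hll; rw [if_pos rfl]
            · rw [if_neg hll, sub_eq_zero]
              exact (hrest l' hll).symm
  · intro h
    apply SimpleGraph.boxProd_adj.mpr
    rcases h with ⟨i, s, hs, heq⟩ | ⟨j, s, hs, heq⟩ | ⟨l, c, hc, heq⟩
    · left
      constructor
      · refine (boxPi_adj _ _ _).mpr ⟨i, ?_, ?_⟩
        · apply (shri_adj _ _).mpr
          have h0 : y.1 i - x.1 i = s := by
            have := congrFun (congrArg Prod.fst heq) i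
            simpa [unitS] using this
          have : x.1 i - y.1 i = -s := by rw [← h0, neg_sub]
          rw [this]
          exact shriS_neg_mem _ hs
        · intro i' hii
          have h0 : y.1 i' - x.1 i' = 0 := by
            have := congrFun (congrArg Prod.fst heq) i'
            simpa [unitS, hii] using this
          exact (sub_eq_zero.mp h0).symm
      · have h0 : y.2 - x.2 = 0 := congrArg Prod.snd heq
        exact (sub_eq_zero.mp h0).symm
    · right
      constructor
      · apply SimpleGraph.boxProd_adj.mpr
        left
        constructor
        · refine (boxPi_adj _ _ _).mpr ⟨j, ?_, ?_⟩
          · apply (SimpleGraph.top_adj _ _).mpr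
            have h0 : y.2.1 j - x.2.1 j = s := by
              have := congrFun (congrArg (fun z => z.2.1) heq) j
              simpa [unitP] using this
            intro hc'
            exact hs (by rw [← h0, hc', sub_self])
          · intro j' hjj
            have h0 : y.2.1 j' - x.2.1 j' = 0 := by
              have := congrFun (congrArg (fun z => z.2.1) heq) j'
              simpa [unitP, hjj] using this
            exact (sub_eq_zero.mp h0).symm
        · have h0 : y.2.2 - x.2.2 = 0 := congrArg (fun z => z.2.2) heq
          exact (sub_eq_zero.mp h0).symm
      · have h0 : y.1 - x.1 = 0 := congrArg Prod.fst heq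
        exact (sub_eq_zero.mp h0).symm
    · right
      constructor
      · apply SimpleGraph.boxProd_adj.mpr
        right
        constructor
        · refine (boxPi_adj _ _ _).mpr ⟨l, ?_, ?_⟩
          · apply (SimpleGraph.top_adj _ _).mpr
            have h0 : y.2.2 l - x.2.2 l = c := by
              have := congrFun (congrArg (fun z => z.2.2) heq) l
              simpa [unitZ] using this
            intro hc'
            exact hc (by rw [← h0, hc', sub_self])
          · intro l' hll
            have h0 : y.2.2 l' - x.2.2 l' = 0 := by
              have := congrFun (congrArg (fun z => z.2.2) heq) l'
              simpa [unitZ, hll] using this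
            exact (sub_eq_zero.mp h0).symm
        · have h0 : y.2.1 - x.2.1 = 0 := congrArg (fun z => z.2.1) heq
          exact (sub_eq_zero.mp h0).symm
      · have h0 : y.1 - x.1 = 0 := congrArg Prod.fst heq
        exact (sub_eq_zero.mp h0).symm

end DoobPf

namespace DoobPf

variable {g e : ℕ}

lemma z2_cases : ∀ s : ZMod 2 × ZMod 2, s ≠ 0 → s = (1,0) ∨ s = (0,1) ∨ s = (1,1) := by
  decide
lemma z4_cases : ∀ c : ZMod 4, c ≠ 0 → c = 1 ∨ c = 2 ∨ c = 3 := by decide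
lemma pm_odd_mem : ∀ r : Fin 3, pm r 1 ∈ sixS ∧ pm r 3 ∈ sixS := by decide

lemma qm_eq_of_common {u X Y : Hg g e} (h1 : u ∈ cls X) (h2 : u ∈ cls Y) :
    qm X = qm Y := by
  rw [qm_eq_iff, ← cls_eq_of_mem h1, cls_eq_of_mem h2]

lemma tor_iff_of_qm_eq {X Y : Hg g e} (h : qm X = qm Y) :
    X + X = 0 ↔ Y + Y = 0 := by
  rw [← torQ_iff (x := X), ← torQ_iff (x := Y), h]

theorem key_exists_unique
    {m n' n'' k : ℕ}
    (hS : Fin m → Hg g e) (tP : Fin n' → Hg g e) (wC tC : Fin k → Hg g e)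
    (jof : Fin n'' → Fin k) (rof : Fin n'' → Fin 3)
    (hSnt : ∀ i, hS i + hS i ≠ 0)
    (htor : ∀ j, tP j + tP j = 0) (htnz : ∀ j, tP j ≠ 0)
    (hwt : ∀ j, wC j + wC j = tC j) (htCnz : ∀ j, tC j ≠ 0)
    (hSinj : ∀ i i', qm (hS i) = qm (hS i') → i = i')
    (hPinj : ∀ j j', qm (tP j) = qm (tP j') → j = j')
    (hWinj : ∀ j j', qm (wC j) = qm (wC j') → j = j')
    (hTinj : ∀ j j', qm (tC j) = qm (tC j') → j = j')
    (hSW : ∀ i j, qm (hS i) ≠ qm (wC j))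
    (hPT : ∀ j j', qm (tP j) ≠ qm (tC j'))
    (hjr_inj : ∀ l l', jof l = jof l' → rof l = rof l' → l = l')
    (hjr_surj : ∀ (j : Fin k) (r : Fin 3), ∃ l, jof l = j ∧ rof l = r)
    (hcover : ∀ x : Hg g e, x ≠ 0 →
      (∃ i, qm x = qm (hS i)) ∨ (∃ j, qm x = qm (tP j)) ∨
      (∃ j, qm x = qm (wC j)) ∨ (∃ j, qm x = qm (tC j)))
    (hval : Hg g e) :
    ∃! b : DoobVtx m n' n'',
      (b = 0 ∨ ballP b) ∧
        phiF hS tP (fun l => spow (rof l).val (wC (jof l))) b = hval := by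
  set wcol : Fin n'' → Hg g e := fun l => spow (rof l).val (wC (jof l)) with hwcol
  -- derived nonvanishing facts
  have hSnz : ∀ i, hS i ≠ 0 := fun i h0 => hSnt i (by rw [h0, add_zero])
  have hwnt : ∀ j, wC j + wC j ≠ 0 := fun j h0 => htCnz j (by rw [← hwt j]; exact h0)
  have hwnz : ∀ j, wC j ≠ 0 := fun j h0 => htCnz j (by rw [← hwt j, h0, add_zero])
  have httor : ∀ j, tC j + tC j = 0 := fun j => by
    rw [← hwt j]; exact four_torsion (wC j)
  -- membership of values in classes
  have hvS_mem : ∀ (i : Fin m) s, s ∈ shriS → esc (hS i) s ∈ cls (hS i) := by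
    intro i s hs
    rw [cls_eq_image]
    exact Finset.mem_image_of_mem _ (shriS_eq_sixS ▸ hs)
  have hvP_mem : ∀ (j : Fin n') s, s ≠ 0 → esc2 (tP j) s ∈ cls (tP j) := by
    intro j s hs
    rcases z2_cases s hs with rfl | rfl | rfl
    · rw [esc2_10]; exact mem_cls_self _
    · rw [esc2_01]; simp [cls]
    · rw [esc2_11 (htor j)]; simp [cls]
  have hvW_mem : ∀ (j : Fin k) (r : Fin 3) (c : ZMod 4), c = 1 ∨ c = 3 →
      zsm c (spow r.val (wC j)) ∈ cls (wC j) := by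
    intro j r c hc
    rw [zsm_spow]
    rw [cls_eq_image]
    apply Finset.mem_image_of_mem
    rcases hc with rfl | rfl
    · exact (pm_odd_mem r).1
    · exact (pm_odd_mem r).2
  have hvT_val : ∀ (j : Fin k) (r : Fin 3),
      zsm 2 (spow r.val (wC j)) = spow r.val (tC j) := by
    intro j r
    rw [zsm_two_spow, hwt]
  have hvT_mem : ∀ (j : Fin k) (r : Fin 3),
      zsm 2 (spow r.val (wC j)) ∈ cls (tC j) := by
    intro j r
    rw [hvT_val]
    exact spow_mem_cls _ _
  -- nonvanishing of values
  have hnz_of_mem : ∀ {u X : Hg g e}, u ∈ cls X → X ≠ 0 → u ≠ 0 := by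
    intro u X hm hX h0
    exact hX (eq_zero_of_zero_mem_cls (h0 ▸ hm))
  -- evaluation lemmas
  have hES : ∀ (i : Fin m) s, phiF hS tP wcol (unitS i s) = esc (hS i) s :=
    fun i s => phiF_unitS hS tP wcol i s
  have hEP : ∀ (j : Fin n') s, phiF hS tP wcol (unitP j s) = esc2 (tP j) s :=
    fun j s => phiF_unitP hS tP wcol j s
  have hEZ : ∀ (l : Fin n'') c, phiF hS tP wcol (unitZ l c)
      = zsm c (spow (rof l).val (wC (jof l))) :=
    fun l c => phiF_unitZ hS tP wcol l c
  -- value of a Z-descriptor is in the class of wC or tC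
  have hvZ_nz : ∀ (l : Fin n'') (c : ZMod 4), c ≠ 0 →
      zsm c (spow (rof l).val (wC (jof l))) ≠ 0 := by
    intro l c hc
    rcases z4_cases c hc with rfl | rfl | rfl
    · exact hnz_of_mem (hvW_mem _ _ _ (Or.inl rfl)) (hwnz _)
    · rw [hvT_val]
      exact spow_ne_zero (htCnz _) _
    · exact hnz_of_mem (hvW_mem _ _ _ (Or.inr rfl)) (hwnz _)
  -- nonzero of all values
  have hB : ∀ b : DoobVtx m n' n'', ballP b → phiF hS tP wcol b ≠ 0 := by
    rintro b (⟨i, s, hs, rfl⟩ | ⟨j, s, hs, rfl⟩ | ⟨l, c, hc, rfl⟩)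
    · rw [hES]; exact hnz_of_mem (hvS_mem i s hs) (hSnz i)
    · rw [hEP]; exact hnz_of_mem (hvP_mem j s hs) (htnz j)
    · rw [hEZ]; exact hvZ_nz l c hc
  -- cross-type inequalities
  have hndSP : ∀ (i : Fin m) (j : Fin n') s s', s ∈ shriS → s' ≠ 0 →
      esc (hS i) s ≠ esc2 (tP j) s' := by
    intro i j s s' hs hs' hv
    have hm2 : esc (hS i) s ∈ cls (tP j) := by rw [hv]; exact hvP_mem j s' hs'
    have hq := qm_eq_of_common (hvS_mem i s hs) hm2
    exact hSnt i ((tor_iff_of_qm_eq hq).mpr (htor j))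
  have hndSZ : ∀ (i : Fin m) (l : Fin n'') s c, s ∈ shriS → c ≠ 0 →
      esc (hS i) s ≠ zsm c (spow (rof l).val (wC (jof l))) := by
    intro i l s c hs hc hv
    rcases z4_cases c hc with rfl | rfl | rfl
    · have hm2 : esc (hS i) s ∈ cls (wC (jof l)) := by
        rw [hv]; exact hvW_mem _ _ _ (Or.inl rfl)
      exact hSW i (jof l) (qm_eq_of_common (hvS_mem i s hs) hm2)
    · have hm2 : esc (hS i) s ∈ cls (tC (jof l)) := by rw [hv]; exact hvT_mem _ _
      have hq := qm_eq_of_common (hvS_mem i s hs) hm2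
      exact hSnt i ((tor_iff_of_qm_eq hq).mpr (httor _))
    · have hm2 : esc (hS i) s ∈ cls (wC (jof l)) := by
        rw [hv]; exact hvW_mem _ _ _ (Or.inr rfl)
      exact hSW i (jof l) (qm_eq_of_common (hvS_mem i s hs) hm2)
  have hndPZ : ∀ (j : Fin n') (l : Fin n'') s c, s ≠ 0 → c ≠ 0 →
      esc2 (tP j) s ≠ zsm c (spow (rof l).val (wC (jof l))) := by
    intro j l s c hs hc hv
    rcases z4_cases c hc with rfl | rfl | rfl
    · have hm2 : esc2 (tP j) s ∈ cls (wC (jof l)) := by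
        rw [hv]; exact hvW_mem _ _ _ (Or.inl rfl)
      have hq := qm_eq_of_common (hvP_mem j s hs) hm2
      exact hwnt (jof l) ((tor_iff_of_qm_eq hq).mp (htor j))
    · have hm2 : esc2 (tP j) s ∈ cls (tC (jof l)) := by rw [hv]; exact hvT_mem _ _
      exact hPT j (jof l) (qm_eq_of_common (hvP_mem j s hs) hm2)
    · have hm2 : esc2 (tP j) s ∈ cls (wC (jof l)) := by
        rw [hv]; exact hvW_mem _ _ _ (Or.inr rfl)
      have hq := qm_eq_of_common (hvP_mem j s hs) hm2
      exact hwnt (jof l) ((tor_iff_of_qm_eq hq).mp (htor j))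
  -- same-type injectivity
  have hinjS : ∀ (i i' : Fin m) s s', s ∈ shriS → s' ∈ shriS →
      esc (hS i) s = esc (hS i') s' → unitS (m := m) (n' := n') (n'' := n'') i s = unitS i' s' := by
    intro i i' s s' hs hs' hv
    have hm2 : esc (hS i) s ∈ cls (hS i') := by rw [hv]; exact hvS_mem i' s' hs'
    have hii := hSinj i i' (qm_eq_of_common (hvS_mem i s hs) hm2)
    subst hii
    obtain ⟨h1, h2⟩ := scalar_inj4 (hSnt i) s.1 s.2 s'.1 s'.2 hv
    rw [Prod.ext_iff.mpr ⟨h1, h2⟩]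
  have hinjP : ∀ (j j' : Fin n') s s', s ≠ 0 → s' ≠ 0 →
      esc2 (tP j) s = esc2 (tP j') s' → unitP (m := m) (n' := n') (n'' := n'') j s = unitP j' s' := by
    intro j j' s s' hs hs' hv
    have hm2 : esc2 (tP j) s ∈ cls (tP j') := by rw [hv]; exact hvP_mem j' s' hs'
    have hjj := hPinj j j' (qm_eq_of_common (hvP_mem j s hs) hm2)
    subst hjj
    obtain ⟨h1, h2⟩ := scalar_inj2 (htnz j) s.1 s.2 s'.1 s'.2 hv
    rw [Prod.ext_iff.mpr ⟨h1, h2⟩]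
  have hinjZ : ∀ (l l' : Fin n'') c c', c ≠ 0 → c' ≠ 0 →
      zsm c (spow (rof l).val (wC (jof l))) = zsm c' (spow (rof l').val (wC (jof l'))) →
      unitZ (m := m) (n' := n') (n'' := n'') l c = unitZ l' c' := by
    intro l l' c c' hc hc' hv
    -- first, jof l = jof l'
    have hjj : jof l = jof l' := by
      rcases z4_cases c hc with rfl | rfl | rfl <;>
        rcases z4_cases c' hc' with rfl | rfl | rfl
      · exact hWinj _ _ (qm_eq_of_common (hvW_mem _ _ _ (Or.inl rfl))
          (by rw [hv]; exact hvW_mem _ _ _ (Or.inl rfl)))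
      · exact absurd ((tor_iff_of_qm_eq (qm_eq_of_common (hvW_mem _ _ _ (Or.inl rfl))
          (by rw [hv]; exact hvT_mem _ _))).mpr (httor _)) (hwnt _)
      · exact hWinj _ _ (qm_eq_of_common (hvW_mem _ _ _ (Or.inl rfl))
          (by rw [hv]; exact hvW_mem _ _ _ (Or.inr rfl)))
      · exact absurd ((tor_iff_of_qm_eq (qm_eq_of_common (hvT_mem _ _)
          (by rw [hv]; exact hvW_mem _ _ _ (Or.inl rfl)))).mp (httor _)) (hwnt _)
      · exact hTinj _ _ (qm_eq_of_common (hvT_mem _ _)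
          (by rw [hv]; exact hvT_mem _ _))
      · exact absurd ((tor_iff_of_qm_eq (qm_eq_of_common (hvT_mem _ _)
          (by rw [hv]; exact hvW_mem _ _ _ (Or.inr rfl)))).mp (httor _)) (hwnt _)
      · exact hWinj _ _ (qm_eq_of_common (hvW_mem _ _ _ (Or.inr rfl))
          (by rw [hv]; exact hvW_mem _ _ _ (Or.inl rfl)))
      · exact absurd ((tor_iff_of_qm_eq (qm_eq_of_common (hvW_mem _ _ _ (Or.inr rfl))
          (by rw [hv]; exact hvT_mem _ _))).mpr (httor _)) (hwnt _)
      · exact hWinj _ _ (qm_eq_of_common (hvW_mem _ _ _ (Or.inr rfl))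
          (by rw [hv]; exact hvW_mem _ _ _ (Or.inr rfl)))
    rw [← hjj] at hv
    rw [zsm_spow, zsm_spow] at hv
    obtain ⟨h1, h2⟩ := scalar_inj4 (hwnt (jof l)) _ _ _ _ hv
    obtain ⟨hr, hcc⟩ := pm_inj (rof l) (rof l') c c' hc hc' (Prod.ext_iff.mpr ⟨h1, h2⟩)
    have hll := hjr_inj l l' hjj hr
    rw [hll, hcc]
  -- full injectivity on the ball
  have hinj : ∀ b b' : DoobVtx m n' n'', (b = 0 ∨ ballP b) → (b' = 0 ∨ ballP b') →
      phiF hS tP wcol b = phiF hS tP wcol b' → b = b' := by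
    rintro b b' (rfl | hb) (rfl | hb') hv
    · rfl
    · exact absurd (by rw [← hv, phiF_zero]) (hB b' hb').symm
    · exact absurd (by rw [hv, phiF_zero]) (hB b hb)
    · rcases hb with ⟨i, s, hs, rfl⟩ | ⟨j, s, hs, rfl⟩ | ⟨l, c, hc, rfl⟩
      · rcases hb' with ⟨i', s', hs', rfl⟩ | ⟨j', s', hs', rfl⟩ | ⟨l', c', hc', rfl⟩
        · rw [hES, hES] at hv
          exact hinjS i i' s s' hs hs' hv
        · rw [hES, hEP] at hv
          exact absurd hv (hndSP i j' s s' hs hs')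
        · rw [hES, hEZ] at hv
          exact absurd hv (hndSZ i l' s c' hs hc')
      · rcases hb' with ⟨i', s', hs', rfl⟩ | ⟨j', s', hs', rfl⟩ | ⟨l', c', hc', rfl⟩
        · rw [hEP, hES] at hv
          exact absurd hv.symm (hndSP i' j s' s hs' hs)
        · rw [hEP, hEP] at hv
          exact hinjP j j' s s' hs hs' hv
        · rw [hEP, hEZ] at hv
          exact absurd hv (hndPZ j l' s c' hs hc')
      · rcases hb' with ⟨i', s', hs', rfl⟩ | ⟨j', s', hs', rfl⟩ | ⟨l', c', hc', rfl⟩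
        · rw [hEZ, hES] at hv
          exact absurd hv.symm (hndSZ i' l s' c hs' hc)
        · rw [hEZ, hEP] at hv
          exact absurd hv.symm (hndPZ j' l s' c hs' hc)
        · rw [hEZ, hEZ] at hv
          exact hinjZ l l' c c' hc hc' hv
  -- surjectivity
  have hsurj : ∀ x : Hg g e, x ≠ 0 → ∃ b, ballP b ∧ phiF hS tP wcol b = x := by
    intro x hx
    rcases hcover x hx with ⟨i, hq⟩ | ⟨j, hq⟩ | ⟨j, hq⟩ | ⟨j, hq⟩
    · have hmem : x ∈ cls (hS i) := mem_cls_iff.mpr (qm_eq_iff.mp hq)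
      rw [cls_eq_image] at hmem
      obtain ⟨p, hp, hesc⟩ := Finset.mem_image.mp hmem
      exact ⟨unitS i p, Or.inl ⟨i, p, by rw [shriS_eq_sixS]; exact hp, rfl⟩,
        by rw [hES]; exact hesc⟩
    · have hmem : x ∈ cls (tP j) := mem_cls_iff.mpr (qm_eq_iff.mp hq)
      rw [cls_tor (htor j)] at hmem
      simp only [Finset.mem_insert, Finset.mem_singleton] at hmem
      rcases hmem with rfl | rfl | rfl
      · exact ⟨unitP j (1,0), Or.inr (Or.inl ⟨j, (1,0), by decide, rfl⟩),
          by rw [hEP, esc2_10]⟩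
      · exact ⟨unitP j (0,1), Or.inr (Or.inl ⟨j, (0,1), by decide, rfl⟩),
          by rw [hEP, esc2_01]⟩
      · exact ⟨unitP j (1,1), Or.inr (Or.inl ⟨j, (1,1), by decide, rfl⟩),
          by rw [hEP, esc2_11 (htor j)]⟩
    · have hmem : x ∈ cls (wC j) := mem_cls_iff.mpr (qm_eq_iff.mp hq)
      rw [cls_eq_image] at hmem
      obtain ⟨p, hp, hesc⟩ := Finset.mem_image.mp hmem
      obtain ⟨r, c, hc0, hpm⟩ := pm_surj p hp
      obtain ⟨l, hl1, hl2⟩ := hjr_surj j r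
      refine ⟨unitZ l c, Or.inr (Or.inr ⟨l, c, hc0, rfl⟩), ?_⟩
      rw [hEZ, hl1, hl2, zsm_spow, hpm]
      exact hesc
    · have hmem : x ∈ cls (tC j) := mem_cls_iff.mpr (qm_eq_iff.mp hq)
      rw [cls_tor (httor j)] at hmem
      simp only [Finset.mem_insert, Finset.mem_singleton] at hmem
      have hex : ∃ r : Fin 3, x = spow r.val (tC j) := by
        rcases hmem with rfl | rfl | rfl
        · exact ⟨0, rfl⟩
        · exact ⟨1, rfl⟩
        · exact ⟨2, rfl⟩
      obtain ⟨r, rfl⟩ := hex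
      obtain ⟨l, hl1, hl2⟩ := hjr_surj j r
      refine ⟨unitZ l 2, Or.inr (Or.inr ⟨l, 2, by decide, rfl⟩), ?_⟩
      rw [hEZ, hl1, hl2, hvT_val]
  -- conclusion
  by_cases h0 : hval = 0
  · subst h0
    refine ⟨0, ⟨Or.inl rfl, phiF_zero _ _ _⟩, ?_⟩
    rintro b' ⟨hb', hvb'⟩
    rcases hb' with rfl | hb'
    · rfl
    · exact absurd hvb' (hB b' hb')
  · obtain ⟨b, hb, hvb⟩ := hsurj hval h0
    refine ⟨b, ⟨Or.inr hb, hvb⟩, ?_⟩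
    rintro b' ⟨hb', hvb'⟩
    exact hinj b' b hb' (Or.inr hb) (by rw [hvb', hvb])

end DoobPf

namespace DoobPf

variable {g e : ℕ}
open Finset

lemma class_count_eqs :
    2 ^ (2*g+2*e) = 1 + 3 * (univ.filter fun c : Qcl g e => torQ c ∧ ¬ c = qm 0).card ∧
    2 ^ (2*g+4*e) = 2 ^ (2*g+2*e)
      + 6 * (univ.filter fun c : Qcl g e => ¬ torQ c).card := by
  have h1 : (univ.filter fun x : Hg g e => torQ (qm x))
      = (univ.filter fun x : Hg g e => x + x = 0) := by
    apply Finset.filter_congr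
    intro x _
    simp only [torQ_iff]
  have h3 : ((univ.filter fun x : Hg g e => torQ (qm x)).filter fun x => qm x = qm 0)
      = ({0} : Finset (Hg g e)) := by
    ext x
    simp only [Finset.mem_filter, Finset.mem_univ, true_and, Finset.mem_singleton,
      qm_eq_zero_iff, torQ_iff]
    constructor
    · rintro ⟨-, h⟩; exact h
    · rintro rfl; exact ⟨by rw [add_zero], rfl⟩
  have h4 : ((univ.filter fun x : Hg g e => torQ (qm x)).filter fun x => ¬ qm x = qm 0)
      = (univ.filter fun x : Hg g e => torQ (qm x) ∧ ¬ qm x = qm 0) := by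
    rw [Finset.filter_filter]
  have h2 := Finset.card_filter_add_card_filter_not
    (s := univ.filter fun x : Hg g e => torQ (qm x)) (p := fun x => qm x = qm 0)
  rw [h3, h4] at h2
  have hN2 := card_filter_classes (g := g) (e := e)
    (fun c => torQ c ∧ ¬ c = qm 0) 3 (fun c hc => by
      refine cls_card_three ?_ hc.1
      intro h0
      exact hc.2 (by rw [← qm_out c, h0]))
  have hN4 := card_filter_classes (g := g) (e := e)
    (fun c => ¬ torQ c) 6 (fun c hc => cls_card_six hc)
  have htorcard : (univ.filter fun x : Hg g e => torQ (qm x)).card = 2 ^ (2*g+2*e) := by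
    rw [h1, card_tor]
  have hsplit := Finset.card_filter_add_card_filter_not
    (s := (univ : Finset (Hg g e))) (p := fun x => torQ (qm x))
  rw [Finset.card_univ, card_Hg] at hsplit
  rw [Finset.card_singleton] at h2
  constructor
  · rw [← htorcard, ← h2, hN2]
  · rw [← hsplit, htorcard, hN4]

lemma pow4_mod3 (t : ℕ) : (2:ℕ) ^ (2 * t) % 3 = 1 := by
  rw [pow_mul]
  rw [Nat.pow_mod]
  norm_num

end DoobPf

open DoobPf Finset

theorem exists_additive_perfect_code_even_Delta (Γ Δ m n' n'' : ℕ)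
    (hΓ : Even Γ) (hΔeven : Even Δ) (hΔ : 2 ≤ Δ) (hm : 1 ≤ m)
    (h1 : 3 * (2 * m + n' + n'') + 1 = 2 ^ (Γ + 2 * Δ))
    (h2 : 3 * n' + n'' + 1 = 2 ^ (Γ + Δ))
    (h3 : n'' + 1 ≤ 2 ^ Δ) :
    ∃ C : AddSubgroup (DoobVtx m n' n''),
      IsPerfectCode (DoobGraphZ m n' n'') (C : Set (DoobVtx m n' n'')) := by
  classical
  obtain ⟨g, rfl⟩ := hΓ
  obtain ⟨e, rfl⟩ := hΔeven
  rw [show g + g + 2 * (e + e) = 2*g + 4*e by ring] at h1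
  rw [show g + g + (e + e) = 2*g + 2*e by ring] at h2
  rw [show e + e = 2 * e by ring] at h3
  -- extract k with n'' = 3 * k
  have hpowT : (2:ℕ) ^ (2*g+2*e) % 3 = 1 := by
    rw [show 2*g+2*e = 2*(g+e) by ring]
    exact pow4_mod3 _
  have hk3 : n'' % 3 = 0 := by omega
  set k := n'' / 3 with hkdef
  have hk : n'' = 3 * k := by omega
  -- counting facts
  obtain ⟨eqT, eqH⟩ := class_count_eqs (g := g) (e := e)
  have hN2val : (univ.filter fun c : Qcl g e => torQ c ∧ ¬ c = qm 0).card = n' + k := by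
    omega
  have hN4val : (univ.filter fun c : Qcl g e => ¬ torQ c).card = m + k := by
    omega
  -- choose the k special classes
  have h4e : 3 * k + 1 ≤ 4 ^ e := by
    have : (2:ℕ) ^ (2*e) = 4 ^ e := by
      rw [pow_mul]; norm_num
    omega
  have hkle : k ≤ (univ.filter fun c : Qcl g e => s2Q c ∧ c ≠ qm 0).card :=
    card_s2_classes_lower h4e
  obtain ⟨emb⟩ : Nonempty (Fin k ↪ {c : Qcl g e // s2Q c ∧ c ≠ qm 0}) := by
    apply Function.Embedding.nonempty_of_card_le
    rw [Fintype.card_fin, Fintype.card_subtype]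
    exact hkle
  set tC : Fin k → Hg g e := fun j => ((emb j).1).out with htCdef
  have hch : ∀ j, ∃ w : Hg g e, w + w = tC j := fun j => (emb j).2.1
  choose wC hwC using hch
  have hqmtC : ∀ j, qm (tC j) = (emb j).1 := fun j => qm_out _
  have htCnz : ∀ j, tC j ≠ 0 := by
    intro j h0
    exact (emb j).2.2 (by rw [← hqmtC j, h0])
  have htCtor : ∀ j, tC j + tC j = 0 := fun j => by
    rw [← hwC j]; exact four_torsion _
  have hwnt : ∀ j, wC j + wC j ≠ 0 := fun j => by rw [hwC j]; exact htCnz j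
  have hTinj : ∀ j j', qm (tC j) = qm (tC j') → j = j' := by
    intro j j' h
    rw [hqmtC, hqmtC] at h
    exact emb.injective (Subtype.ext h)
  have hWinj : ∀ j j', qm (wC j) = qm (wC j') → j = j' := by
    intro j j' h
    apply hTinj
    rw [← hwC j, ← hwC j']
    exact qm_dbl h
  -- the equivalences for the remaining classes
  have hcardA : Fintype.card {c : Qcl g e // ¬ torQ c ∧ ¬ ∃ j, c = qm (wC j)} = m := by
    rw [Fintype.card_subtype]
    have hsd : (univ.filter fun c : Qcl g e => ¬ torQ c ∧ ¬ ∃ j, c = qm (wC j))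
        = (univ.filter fun c : Qcl g e => ¬ torQ c) \ (univ.image fun j => qm (wC j)) := by
      ext c
      simp only [Finset.mem_filter, Finset.mem_univ, true_and, Finset.mem_sdiff,
        Finset.mem_image, eq_comm]
      try tauto
    rw [hsd, Finset.card_sdiff_of_subset (by
      intro c hc
      obtain ⟨j, _, rfl⟩ := Finset.mem_image.mp hc
      simp only [Finset.mem_filter, Finset.mem_univ, true_and]
      intro htor0
      exact hwnt j (torQ_iff.mp htor0))]
    rw [Finset.card_image_of_injective _ (fun j j' h => hWinj j j' h), Finset.card_univ,
      Fintype.card_fin, hN4val]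
    omega
  have hcardB : Fintype.card
      {c : Qcl g e // torQ c ∧ ¬ c = qm 0 ∧ ¬ ∃ j, c = qm (tC j)} = n' := by
    rw [Fintype.card_subtype]
    have hsd : (univ.filter fun c : Qcl g e => torQ c ∧ ¬ c = qm 0 ∧ ¬ ∃ j, c = qm (tC j))
        = (univ.filter fun c : Qcl g e => torQ c ∧ ¬ c = qm 0)
          \ (univ.image fun j => qm (tC j)) := by
      ext c
      simp only [Finset.mem_filter, Finset.mem_univ, true_and, Finset.mem_sdiff,
        Finset.mem_image, eq_comm]
      try tauto
    rw [hsd, Finset.card_sdiff_of_subset (by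
      intro c hc
      obtain ⟨j, _, rfl⟩ := Finset.mem_image.mp hc
      simp only [Finset.mem_filter, Finset.mem_univ, true_and]
      refine ⟨torQ_iff.mpr (htCtor j), ?_⟩
      intro h0
      exact htCnz j (qm_eq_zero_iff.mp h0))]
    rw [Finset.card_image_of_injective _ (fun j j' h => hTinj j j' h), Finset.card_univ,
      Fintype.card_fin, hN2val]
    omega
  set αq := (Fintype.equivFinOfCardEq hcardA).symm with hαdef
  set βq := (Fintype.equivFinOfCardEq hcardB).symm with hβdef
  set hS : Fin m → Hg g e := fun i => ((αq i).1).out with hSdef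
  set tP : Fin n' → Hg g e := fun j => ((βq j).1).out with tPdef
  have hqm_hS : ∀ i, qm (hS i) = (αq i).1 := fun i => qm_out _
  have hqm_tP : ∀ j, qm (tP j) = (βq j).1 := fun j => qm_out _
  have hSnt : ∀ i, hS i + hS i ≠ 0 := fun i => (αq i).2.1
  have htor : ∀ j, tP j + tP j = 0 := fun j => (βq j).2.1
  have htnz : ∀ j, tP j ≠ 0 := by
    intro j h0
    exact (βq j).2.2.1 (by rw [← hqm_tP j, h0])
  have hSinj : ∀ i i', qm (hS i) = qm (hS i') → i = i' := by
    intro i i' h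
    rw [hqm_hS, hqm_hS] at h
    exact αq.injective (Subtype.ext h)
  have hPinj : ∀ j j', qm (tP j) = qm (tP j') → j = j' := by
    intro j j' h
    rw [hqm_tP, hqm_tP] at h
    exact βq.injective (Subtype.ext h)
  have hSW : ∀ i j, qm (hS i) ≠ qm (wC j) := by
    intro i j h
    exact (αq i).2.2 ⟨j, by rw [← hqm_hS i]; exact h⟩
  have hPT : ∀ j j', qm (tP j) ≠ qm (tC j') := by
    intro j j' h
    exact (βq j).2.2.2 ⟨j', by rw [← hqm_tP j]; exact h⟩
  -- index decomposition for the Z-part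
  have hlk : ∀ l : Fin n'', l.val / 3 < k := fun l => by
    have := l.2; omega
  set jof : Fin n'' → Fin k := fun l => ⟨l.val / 3, hlk l⟩ with hjofdef
  set rof : Fin n'' → Fin 3 := fun l => ⟨l.val % 3, Nat.mod_lt _ (by norm_num)⟩ with hrofdef
  have hjr_inj : ∀ l l', jof l = jof l' → rof l = rof l' → l = l' := by
    intro l l' hj hr
    have hjv := congrArg Fin.val hj
    have hrv := congrArg Fin.val hr
    simp only [hjofdef, hrofdef] at hjv hrv
    apply Fin.ext
    omega
  have hjr_surj : ∀ (j : Fin k) (r : Fin 3), ∃ l, jof l = j ∧ rof l = r := by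
    intro j r
    refine ⟨⟨3 * j.val + r.val, by have := j.2; have := r.2; omega⟩, ?_, ?_⟩
    · apply Fin.ext
      show (3 * j.val + r.val) / 3 = j.val
      have := r.2
      omega
    · apply Fin.ext
      show (3 * j.val + r.val) % 3 = r.val
      have := r.2
      omega
  -- covering
  have hcover : ∀ x : Hg g e, x ≠ 0 →
      (∃ i, qm x = qm (hS i)) ∨ (∃ j, qm x = qm (tP j)) ∨
      (∃ j, qm x = qm (wC j)) ∨ (∃ j, qm x = qm (tC j)) := by
    intro x hx
    by_cases ht : torQ (qm x)
    · by_cases hT : ∃ j, qm x = qm (tC j)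
      · exact Or.inr (Or.inr (Or.inr hT))
      · refine Or.inr (Or.inl ?_)
        have hc0 : ¬ (qm x = qm 0) := fun h => hx (qm_eq_zero_iff.mp h)
        refine ⟨βq.symm ⟨qm x, ht, hc0, hT⟩, ?_⟩
        rw [hqm_tP, Equiv.apply_symm_apply]
    · by_cases hW : ∃ j, qm x = qm (wC j)
      · exact Or.inr (Or.inr (Or.inl hW))
      · refine Or.inl ?_
        refine ⟨αq.symm ⟨qm x, ht, hW⟩, ?_⟩
        rw [hqm_hS, Equiv.apply_symm_apply]
  -- the key existence/uniqueness
  have keyEU := fun hval => key_exists_unique (g := g) (e := e) hS tP wC tC jof rof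
    hSnt htor htnz hwC htCnz hSinj hPinj hWinj hTinj hSW hPT hjr_inj hjr_surj hcover hval
  set wcol : Fin n'' → Hg g e := fun l => spow (rof l).val (wC (jof l)) with hwcoldef
  -- the code
  refine ⟨{
    carrier := {v : DoobVtx m n' n'' | phiF hS tP wcol v = 0}
    add_mem' := by
      intro a b ha hb
      simp only [Set.mem_setOf_eq] at ha hb ⊢
      rw [phiF_add hS tP wcol htor, ha, hb, add_zero]
    zero_mem' := phiF_zero _ _ _
    neg_mem' := by
      intro a ha
      simp only [Set.mem_setOf_eq] at ha ⊢
      have h0 : phiF hS tP wcol (a + -a) = 0 := by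
        rw [add_neg_cancel]; exact phiF_zero _ _ _
      rw [phiF_add hS tP wcol htor, ha, zero_add] at h0
      exact h0 }, ?_⟩
  intro v
  obtain ⟨b, ⟨hb1, hb2⟩, hbu⟩ := keyEU (- phiF hS tP wcol v)
  refine ⟨v + b, ⟨?_, ?_⟩, ?_⟩
  · show phiF hS tP wcol (v + b) = 0
    rw [phiF_add hS tP wcol htor, hb2, add_neg_cancel]
  · rcases hb1 with rfl | hb1
    · exact Or.inl (add_zero v).symm
    · refine Or.inr ((adj_iff_ballP v (v + b)).mpr ?_)
      rw [add_sub_cancel_left]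
      exact hb1
  · rintro c' ⟨hc'1, hc'2⟩
    have hc'1' : phiF hS tP wcol c' = 0 := hc'1
    have hsum : phiF hS tP wcol c' = phiF hS tP wcol v + phiF hS tP wcol (c' - v) := by
      have := phiF_add hS tP wcol htor v (c' - v)
      rw [add_sub_cancel] at this
      exact this
    have hφ : phiF hS tP wcol (c' - v) = - phiF hS tP wcol v := by
      apply eq_neg_of_add_eq_zero_right
      rw [← hsum]
      exact hc'1'
    have hball : (c' - v = 0 ∨ ballP (c' - v)) := by
      rcases hc'2 with heq | hadj
      · exact Or.inl (sub_eq_zero.mpr heq.symm)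
      · exact Or.inr ((adj_iff_ballP v c').mp hadj)
    have := hbu (c' - v) ⟨hball, hφ⟩
    rw [← this, add_sub_cancel]
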